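/- Let δ > d ≥ 1 and γ > 0 be integers (Case 2 with δ > d). Then the set I_f = {l > 0 : l δ ≤ γ + l d ≤ i + l j for all (i,j) with b_{ij} ≠ 0} equals the closed interval [max over (i,j) with j > d of (γ-i)/(j-d), γ/(δ-d)], and its minimum is l_1 = (n_s - n_{s-1})/(m_{s-1} - m_s), where (γ,d) = (n_s,m_s) is the last Newton polygon vertex. -/
import Mathlib


/-- In Case 2 with δ > d ≥ 1, γ > 0, (γ,d) = (n_s,m_s) the last vertex of
the Newton polygon and (n',m') = (n_{s-1},m_{s-1}) the previous one, assuming δ ≤ T_{s-1},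
the interval I_f = {l > 0 : lδ ≤ γ + ld ≤ i + lj for all (i,j) with b_{ij} ≠ 0} equals
[l₁, γ/(δ-d)], where l₁ = (n_s-n_{s-1})/(m_{s-1}-m_s) is the maximum of (γ-i)/(j-d) over
support points with j > d, and l₁ is the minimum of I_f. -/
theorem stmt8
    (S : Set (ℕ × ℕ)) (γ d δ n' m' : ℕ)
    (hδd : d < δ) (hd : 1 ≤ d) (hγ : 0 < γ)
    (hn : n' < γ) (hm : d < m') (hmem : (n', m') ∈ S)
    (hj : ∀ p ∈ S, d ≤ p.2)
    (hjd : ∀ p ∈ S, p.2 = d → γ ≤ p.1)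
    (l1 : ℝ) (hl1 : l1 = ((γ : ℝ) - n') / ((m' : ℝ) - d))
    (hmax : IsGreatest {x : ℝ | ∃ p ∈ S, d < p.2 ∧ x = ((γ : ℝ) - p.1) / ((p.2 : ℝ) - d)} l1)
    (hT : (δ : ℝ) ≤ l1⁻¹ * γ + d)
    (I : Set ℝ)
    (hI : I = {l : ℝ | 0 < l ∧ l * δ ≤ (γ : ℝ) + l * d ∧
      ∀ p ∈ S, (γ : ℝ) + l * d ≤ (p.1 : ℝ) + l * p.2}) :
    I = Set.Icc l1 ((γ : ℝ) / ((δ : ℝ) - d)) ∧ IsLeast I l1 := by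
  have hm'd : (0:ℝ) < (m':ℝ) - d := by
    have : (d:ℝ) < m' := by exact_mod_cast hm
    linarith
  have hl1pos : 0 < l1 := by
    rw [hl1]
    apply div_pos _ hm'd
    have : (n':ℝ) < γ := by exact_mod_cast hn
    linarith
  have hδd' : (0:ℝ) < (δ:ℝ) - d := by
    have : (d:ℝ) < δ := by exact_mod_cast hδd
    linarith
  have hupper : l1 ≤ (γ:ℝ) / ((δ:ℝ) - d) := by
    rw [le_div_iff₀ hδd']
    have h1 : l1 * (δ:ℝ) ≤ l1 * (l1⁻¹ * γ + d) :=
      mul_le_mul_of_nonneg_left hT hl1pos.le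
    rw [mul_add, ← mul_assoc, mul_inv_cancel₀ hl1pos.ne', one_mul] at h1
    nlinarith
  have hIcc_sub : Set.Icc l1 ((γ:ℝ) / ((δ:ℝ) - d)) ⊆ I := by
    rintro l ⟨hll, hlr⟩
    have hlpos : 0 < l := lt_of_lt_of_le hl1pos hll
    rw [hI]
    refine ⟨hlpos, ?_, ?_⟩
    · have := (le_div_iff₀ hδd').mp hlr
      nlinarith
    · intro p hp
      rcases eq_or_lt_of_le (hj p hp) with h | h
      · have h2 : γ ≤ p.1 := hjd p hp h.symm
        have h2' : (γ:ℝ) ≤ p.1 := by exact_mod_cast h2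
        have h3 : (d:ℝ) = p.2 := by exact_mod_cast h
        nlinarith
      · have hx : ((γ:ℝ) - p.1) / ((p.2:ℝ) - d) ≤ l1 := hmax.2 ⟨p, hp, h, rfl⟩
        have hpd : (0:ℝ) < (p.2:ℝ) - d := by
          have : (d:ℝ) < p.2 := by exact_mod_cast h
          linarith
        have := (div_le_iff₀ hpd).mp (hx.trans hll)
        nlinarith
  have hsub : I ⊆ Set.Icc l1 ((γ:ℝ) / ((δ:ℝ) - d)) := by
    rintro l hl
    rw [hI] at hl
    obtain ⟨hlpos, hlδ, hall⟩ := hl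
    constructor
    · have h := hall (n', m') hmem
      simp only at h
      rw [hl1, div_le_iff₀ hm'd]
      nlinarith
    · rw [le_div_iff₀ hδd']
      nlinarith
  have heq : I = Set.Icc l1 ((γ:ℝ) / ((δ:ℝ) - d)) :=
    Set.Subset.antisymm hsub hIcc_sub
  refine ⟨heq, hIcc_sub ⟨le_refl l1, hupper⟩, fun l hl => (hsub hl).1⟩
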